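/- Let L be a finitely generated group and R a normal subgroup of L such that every homomorphism from H = L/R to a finite group is trivial. Let U be a normal subgroup of L with U ≤ R and [R : U] finite, let U^L be the intersection of all finite-index subgroups of L containing U, and set U^R = U^L ∩ R. Then there exists a surjective group homomorphism from H₂(H, ℤ) onto the quotient group U^R/U. -/

import Mathlib

/-- The kernel of the canonical presentation `FreeGroup G → G`. -/
def presentationKernel (G : Type*) [Group G] : Subgroup (FreeGroup G) :=
  (FreeGroup.lift (id : G → G)).ker

/-- Numerator `R ⊓ [F, F]` of Hopf's formula. -/
def hopfNumerator (G : Type*) [Group G] : Subgroup (FreeGroup G) :=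
  presentationKernel G ⊓ commutator (FreeGroup G)

/-- Denominator `[F, R]` of Hopf's formula. -/
def hopfDenominator (G : Type*) [Group G] : Subgroup (FreeGroup G) :=
  ⁅(⊤ : Subgroup (FreeGroup G)), presentationKernel G⁆

instance (G : Type*) [Group G] : (presentationKernel G).Normal := by
  unfold presentationKernel; infer_instance

instance (G : Type*) [Group G] : (hopfDenominator G).Normal := by
  unfold hopfDenominator; infer_instance

/-- The second integral homology `H₂(G, ℤ)` (Schur multiplier), via Hopf's formula
`H₂(G) = (R ∩ [F, F]) / [F, R]` for the canonical presentation `1 → R → F → G → 1`. -/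
def schurMultiplier (G : Type*) [Group G] : Type _ :=
  hopfNumerator G ⧸ (hopfDenominator G).subgroupOf (hopfNumerator G)

instance (G : Type*) [Group G] : Group (schurMultiplier G) := by
  unfold schurMultiplier; infer_instance

/-- The fiber product `L ×_{L/N} L = {(x, y) | x⁻¹ * y ∈ N}` as a subgroup of `L × L`. -/
def fiberProduct {L : Type*} [Group L] (N : Subgroup L) [N.Normal] : Subgroup (L × L) where
  carrier := {p | p.1⁻¹ * p.2 ∈ N}
  one_mem' := by simpa using N.one_mem
  mul_mem' := by
    intro a b ha hb
    simp only [Set.mem_setOf_eq, ← QuotientGroup.eq] at *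
    simp only [Prod.fst_mul, Prod.snd_mul, QuotientGroup.mk_mul, ha, hb]
  inv_mem' := by
    intro a ha
    simp only [Set.mem_setOf_eq, ← QuotientGroup.eq] at *
    simp only [Prod.fst_inv, Prod.snd_inv, QuotientGroup.mk_inv, ha]

/-- The closure of a subgroup `U` in the profinite topology of `L`: the intersection of
all finite-index subgroups of `L` containing `U`. -/
def profClosure {L : Type*} [Group L] (U : Subgroup L) : Subgroup L :=
  ⨅ V ∈ {V : Subgroup L | V.FiniteIndex ∧ U ≤ V}, V

/-! ### Auxiliary lemmas -/

section AuxLemmas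

variable {G : Type*} [Group G]

lemma myFiniteIndex_of_le {H K : Subgroup G} (h : H ≤ K) (hH : H.FiniteIndex) :
    K.FiniteIndex := by
  constructor
  intro h0
  have hdvd : K.index ∣ H.index := Subgroup.index_dvd_of_le h
  rw [h0] at hdvd
  exact hH.1 (zero_dvd_iff.mp hdvd)

lemma myFinite_monoidHom {C : Type*} [Group C] [Finite C] (hfg : Group.FG G) :
    Finite (G →* C) := by
  obtain ⟨S, hScl, hSfin⟩ := Group.fg_iff.mp hfg
  haveI := hSfin.to_subtype
  have hinj : Function.Injective (fun (φ : G →* C) (s : S) => φ s.1) := by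
    intro φ ψ h
    apply MonoidHom.eq_of_eqOn_top
    rw [← hScl]
    apply MonoidHom.eqOn_closure
    intro x hx
    exact congrFun h ⟨x, hx⟩
  exact Finite.of_injective _ hinj

lemma myFinite_boundedIndex (hfg : Group.FG G) (n : ℕ) :
    {N : Subgroup G | N.FiniteIndex ∧ N.index ≤ n}.Finite := by
  classical
  haveI : Finite (G →* Equiv.Perm (Fin n)) := myFinite_monoidHom hfg
  rw [← Set.finite_coe_iff]
  have key : ∀ N : {N : Subgroup G | N.FiniteIndex ∧ N.index ≤ n},
      ∃ pf : (G →* Equiv.Perm (Fin n)) × Fin n,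
        ∀ g : G, pf.1 g pf.2 = pf.2 ↔ g ∈ (N : Subgroup G) := by
    rintro ⟨N, hNf, hNle⟩
    haveI := hNf
    haveI : Finite (G ⧸ N) := Subgroup.finite_quotient_of_finiteIndex (H := N)
    haveI := Fintype.ofFinite (G ⧸ N)
    obtain ⟨e⟩ : Nonempty ((G ⧸ N) ↪ Fin n) := by
      apply Function.Embedding.nonempty_of_card_le
      rw [Fintype.card_fin, ← Nat.card_eq_fintype_card]
      exact hNle
    refine ⟨⟨(Equiv.Perm.viaEmbeddingHom e).comp (MulAction.toPermHom G (G ⧸ N)),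
      e ((1 : G) : G ⧸ N)⟩, fun g => ?_⟩
    have h1 : (Equiv.Perm.viaEmbeddingHom e) (MulAction.toPermHom G (G ⧸ N) g)
        (e ((1 : G) : G ⧸ N)) = e (((g*1 : G)) : G ⧸ N) := by
      rw [Equiv.Perm.viaEmbeddingHom_apply, Equiv.Perm.viaEmbedding_apply]
      exact congrArg e (MulAction.Quotient.smul_mk N g 1)
    simp only [MonoidHom.coe_comp, Function.comp_apply, h1, mul_one]
    rw [e.injective.eq_iff]
    rw [QuotientGroup.eq]
    simp
  choose pf hpf using key
  have hinj : Function.Injective pf := by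
    intro N N' h
    apply Subtype.ext
    ext g
    rw [← hpf N g, h, hpf N' g]
  exact Finite.of_injective pf hinj

end AuxLemmas

lemma myAdd_divisible : ∀ {A : Type} [AddCommGroup A] [AddGroup.FG A] {β : A} {n : ℕ},
    0 < n → n • β = 0 → (∀ k : ℕ, 0 < k → ∃ γ, k • γ = β) → β = 0 := by
  intro A _ _ β n hn hβ hdiv
  obtain ⟨m, ι, hι, p, hp, e, ⟨E⟩⟩ := AddCommGroup.equiv_free_prod_directSum_zmod A
  haveI : Finite (DirectSum ι fun i => ZMod (p i ^ e i)) := by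
    haveI : ∀ i, NeZero (p i ^ e i) := fun i => ⟨pow_ne_zero _ (hp i).ne_zero⟩
    exact Finite.of_equiv _ DFinsupp.equivFunOnFintype.symm
  set T := DirectSum ι fun i => ZMod (p i ^ e i)
  have h1 : (E β).1 = 0 := by
    have h : n • (E β) = 0 := by rw [← map_nsmul, hβ, map_zero]
    have h' : n • (E β).1 = 0 := congrArg Prod.fst h
    ext a
    have := DFunLike.congr_fun h' a
    simp only [Finsupp.smul_apply, smul_eq_mul, Finsupp.coe_zero,
      Pi.zero_apply, nsmul_eq_mul] at this ⊢
    rcases mul_eq_zero.mp this with h'' | h''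
    · exact absurd (by exact_mod_cast h'') hn.ne'
    · exact h''
  have h2 : (E β).2 = 0 := by
    obtain ⟨γ, hγ⟩ := hdiv (Nat.card T) Nat.card_pos
    have h : E β = Nat.card T • (E γ) := by rw [← map_nsmul, hγ]
    have h' : (E β).2 = Nat.card T • (E γ).2 := congrArg Prod.snd h
    rw [h', card_nsmul_eq_zero']
  have : E β = 0 := Prod.ext h1 h2
  have := congrArg E.symm this
  simpa using this

lemma myComm_divisible {B : Type} [CommGroup B] (hfg : Group.FG B) {β : B} {n : ℕ}
    (hn : 0 < n) (hβ : β ^ n = 1) (hdiv : ∀ k : ℕ, 0 < k → ∃ γ : B, γ ^ k = β) : β = 1 := by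
  haveI := hfg
  have : Additive.ofMul β = 0 := by
    apply myAdd_divisible hn
    · rw [← ofMul_pow, hβ]; rfl
    · intro k hk
      obtain ⟨γ, hγ⟩ := hdiv k hk
      exact ⟨Additive.ofMul γ, by rw [← ofMul_pow, hγ]⟩
  simpa using this

lemma myMem_commutator_of_forall_finiteIndex {Λ : Type} [Group Λ] (hfg : Group.FG Λ)
    (M : Subgroup Λ) (hM : M.FiniteIndex) {z : Λ} {n : ℕ} (hn : 0 < n) (hzn : z ^ n = 1)
    (hall : ∀ W : Subgroup Λ, W.FiniteIndex → z ∈ W) : z ∈ ⁅M, M⁆ := by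
  haveI := hfg; haveI := hM
  have hzM : z ∈ M := hall M hM
  haveI : Group.FG ↥M := M.fg_of_index_ne_zero
  haveI : Group.FG (Abelianization ↥M) := Group.fg_of_surjective
    (f := Abelianization.of (G := ↥M)) (QuotientGroup.mk'_surjective (commutator ↥M))
  set β : Abelianization ↥M := Abelianization.of ⟨z, hzM⟩ with hβdef
  have hzpow : (⟨z, hzM⟩ : ↥M) ^ n = 1 := by
    apply Subtype.ext; push_cast; exact hzn
  have hβn : β ^ n = 1 := by rw [hβdef, ← map_pow, hzpow, map_one]
  have hdiv : ∀ k : ℕ, 0 < k → ∃ γ : Abelianization ↥M, γ ^ k = β := by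
    intro k hk
    set ρ : Abelianization ↥M →* Abelianization ↥M := powMonoidHom k with hρ
    haveI : Finite (Abelianization ↥M ⧸ ρ.range) := by
      apply CommGroup.finite_of_fg_torsion
      intro x
      induction x using QuotientGroup.induction_on with
      | H b =>
        apply isOfFinOrder_iff_pow_eq_one.mpr
        refine ⟨k, hk, ?_⟩
        rw [← QuotientGroup.mk_pow, QuotientGroup.eq_one_iff]
        exact ⟨b, rfl⟩
    set θ : ↥M →* Abelianization ↥M ⧸ ρ.range :=
      (QuotientGroup.mk' ρ.range).comp Abelianization.of with hθ
    haveI : θ.ker.FiniteIndex := Subgroup.finiteIndex_ker θ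
    set W := Subgroup.map M.subtype θ.ker with hW
    have hWle : W ≤ M := Subgroup.map_subtype_le _
    have hrel : W.relIndex M = θ.ker.index := by
      rw [hW, Subgroup.relIndex]
      congr 1
      exact Subgroup.comap_map_eq_self_of_injective M.subtype_injective _
    have hWfi : W.FiniteIndex := by
      constructor
      intro h0
      have := Subgroup.relIndex_mul_index hWle
      rw [h0, hrel] at this
      rcases Nat.mul_eq_zero.mp this with h | h
      · exact (Subgroup.finiteIndex_ker θ).1 h
      · exact hM.1 h
    obtain ⟨w, hwker, hw⟩ := hall W hWfi
    have hwz : w = ⟨z, hzM⟩ := Subtype.ext hw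
    rw [hwz] at hwker
    have : θ ⟨z, hzM⟩ = 1 := hwker
    rw [hθ] at this
    simp only [MonoidHom.coe_comp, Function.comp_apply, QuotientGroup.mk'_apply] at this
    rw [QuotientGroup.eq_one_iff] at this
    obtain ⟨γ, hγ⟩ := this
    exact ⟨γ, hγ⟩
  have hβ1 : β = 1 := myComm_divisible ‹Group.FG (Abelianization ↥M)› hn hβn hdiv
  have hcomm : (⟨z, hzM⟩ : ↥M) ∈ commutator ↥M := by
    have : (QuotientGroup.mk (⟨z, hzM⟩ : ↥M) : ↥M ⧸ commutator ↥M) = 1 := hβ1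
    exact (QuotientGroup.eq_one_iff _).mp this
  have hmap : z ∈ Subgroup.map M.subtype (commutator ↥M) := ⟨_, hcomm, rfl⟩
  rwa [commutator_def, Subgroup.map_commutator, ← MonoidHom.range_eq_map,
    Subgroup.range_subtype] at hmap

/-- Let `L` be finitely generated, `R ◁ L` with `H = L/R` having no
nontrivial finite quotients, and `U ◁ L` with `U ≤ R` of finite index in `R`.  With
`U^R = U^L ∩ R`, there is a surjection `H₂(H, ℤ) ↠ U^R / U`. -/
theorem exists_schur_surjection {L : Type} [Group L] (hfg : Group.FG L)
    (R : Subgroup L) [R.Normal]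
    (hH : ∀ (F : Type) [Group F] [Finite F] (f : (L ⧸ R) →* F), f = 1)
    (U : Subgroup L) [U.Normal] (hUR : U ≤ R) (hfin : (U.subgroupOf R).FiniteIndex) :
    ∃ f : schurMultiplier (L ⧸ R) →*
        (↥(profClosure U ⊓ R) ⧸ U.subgroupOf (profClosure U ⊓ R)),
      Function.Surjective f := by
  classical
  haveI := hfg
  haveI := hfin
  haveI : Finite (↥R ⧸ U.subgroupOf R) := Subgroup.finite_quotient_of_finiteIndex
  set P := profClosure U with hPdef
  -- membership criterion for the profinite closure
  have hPmem : ∀ {x : L}, x ∈ P ↔ ∀ V : Subgroup L, V.FiniteIndex → U ≤ V → x ∈ V := by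
    intro x
    rw [hPdef]
    unfold profClosure
    simp only [Subgroup.mem_iInf, Set.mem_setOf_eq]
    constructor
    · intro h V h1 h2; exact h V ⟨h1, h2⟩
    · intro h V hV; exact h V hV.1 hV.2
  have hUP : U ≤ P := fun u hu => hPmem.mpr (fun V _ h2 => h2 hu)
  -- any normal finite-index subgroup containing U joins with R to the whole group
  have hsup : ∀ N : Subgroup L, N.Normal → N.FiniteIndex → U ≤ N → N ⊔ R = ⊤ := by
    intro N hNn hNf hUN
    haveI := hNn; haveI := hNf
    haveI : (N ⊔ R).Normal := Subgroup.sup_normal N R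
    haveI : (N ⊔ R).FiniteIndex := myFiniteIndex_of_le le_sup_left hNf
    haveI : Finite (L ⧸ (N ⊔ R)) := Subgroup.finite_quotient_of_finiteIndex
    set f : (L ⧸ R) →* (L ⧸ (N ⊔ R)) := QuotientGroup.map R (N ⊔ R) (MonoidHom.id L)
      (by intro x hx; simpa using Subgroup.mem_sup_right hx) with hf
    have hf1 : f = 1 := hH _ f
    rw [Subgroup.eq_top_iff']
    intro x
    have hx : f (QuotientGroup.mk x) = QuotientGroup.mk x := by
      rw [hf, QuotientGroup.map_mk]; rfl
    rw [hf1] at hx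
    exact (QuotientGroup.eq_one_iff x).mp hx.symm
  set n₀ := (U.subgroupOf R).index with hn₀
  -- index bound for normal finite-index subgroups containing U
  have hidx : ∀ N : Subgroup L, N.Normal → N.FiniteIndex → U ≤ N → N.index ≤ n₀ := by
    intro N hNn hNf hUN
    haveI := hNn
    set g : ↥R →* L ⧸ N := (QuotientGroup.mk' N).comp R.subtype with hg
    have hker : ∀ x ∈ U.subgroupOf R, g x = 1 := by
      intro u hu
      have h1 : (u : L) ∈ U := hu
      rw [hg]
      simp only [MonoidHom.coe_comp, Function.comp_apply, QuotientGroup.mk'_apply,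
        Subgroup.coe_subtype]
      rw [QuotientGroup.eq_one_iff]
      exact hUN h1
    set gbar := QuotientGroup.lift (U.subgroupOf R) g hker with hgbar
    have hsurj : Function.Surjective gbar := by
      intro y
      induction y using QuotientGroup.induction_on with
      | H l =>
        have hl : l ∈ (↑(N ⊔ R) : Set L) := by rw [hsup N hNn hNf hUN]; simp
        rw [Subgroup.normal_mul] at hl
        obtain ⟨a, ha, b, hb, hab⟩ := hl
        refine ⟨QuotientGroup.mk ⟨b, hb⟩, ?_⟩
        show QuotientGroup.mk b = QuotientGroup.mk l
        rw [QuotientGroup.eq]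
        have : b⁻¹ * l = b⁻¹ * a * b := by rw [← hab]; group
        rw [this]
        exact hNn.conj_mem' a ha b
    rw [Subgroup.index, hn₀, Subgroup.index]
    exact Nat.card_le_card_of_surjective gbar hsurj
  -- the profinite closure has finite index
  have hPfi : P.FiniteIndex := by
    set NN := {N : Subgroup L | N.Normal ∧ N.FiniteIndex ∧ U ≤ N ∧ N.index ≤ n₀} with hNN
    have hNNfin : NN.Finite := Set.Finite.subset (myFinite_boundedIndex hfg n₀)
      (fun N hN => ⟨hN.2.1, hN.2.2.2⟩)
    haveI : Finite ↥NN := hNNfin.to_subtype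
    have hD : (⨅ N : ↥NN, (N : Subgroup L)).FiniteIndex :=
      Subgroup.finiteIndex_iInf (fun N => N.2.2.1)
    apply myFiniteIndex_of_le _ hD
    rw [hPdef]
    unfold profClosure
    apply le_iInf
    intro V
    apply le_iInf
    intro hV
    haveI := hV.1
    have hVcore : V.normalCore ∈ NN :=
      ⟨V.normalCore_normal, V.finiteIndex_normalCore,
        Subgroup.normal_le_normalCore.mpr hV.2,
        hidx _ V.normalCore_normal V.finiteIndex_normalCore
          (Subgroup.normal_le_normalCore.mpr hV.2)⟩
    exact le_trans (iInf_le _ (⟨V.normalCore, hVcore⟩ : ↥NN)) V.normalCore_le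
  haveI := hPfi
  haveI : Finite (L ⧸ P) := Subgroup.finite_quotient_of_finiteIndex (H := P)
  -- every coset of R meets P
  have hhit : ∀ l : L, ∃ r, r ∈ R ∧ l * r ∈ P := by
    intro l
    set Fv : Subgroup L → Set (↥R ⧸ U.subgroupOf R) :=
      fun V => {b | l * ↑(Quotient.out b) ∈ V} with hFv
    have hFvnonempty : ∀ V : Subgroup L, V.FiniteIndex → U ≤ V → (Fv V).Nonempty := by
      intro V h1 h2
      haveI := h1
      have hl : l ∈ (↑(V.normalCore ⊔ R) : Set L) := by
        rw [hsup _ V.normalCore_normal V.finiteIndex_normalCore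
          (Subgroup.normal_le_normalCore.mpr h2)]
        simp
      rw [Subgroup.normal_mul] at hl
      obtain ⟨a, ha, b, hb, hab⟩ := hl
      refine ⟨QuotientGroup.mk (⟨b⁻¹, inv_mem hb⟩ : ↥R), ?_⟩
      set c := Quotient.out (QuotientGroup.mk (⟨b⁻¹, inv_mem hb⟩ : ↥R)) with hc
      have hcc : c⁻¹ * ⟨b⁻¹, inv_mem hb⟩ ∈ U.subgroupOf R := by
        rw [← QuotientGroup.eq, hc, QuotientGroup.out_eq']
      have hcU : ((c : ↥R) : L)⁻¹ * b⁻¹ ∈ U := hcc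
      show l * ↑c ∈ V
      have hrw : l * (c : L) = a * ((c:L)⁻¹ * b⁻¹)⁻¹ := by
        rw [← hab]; group
      rw [hrw]
      exact mul_mem (V.normalCore_le ha) (h2 (inv_mem hcU))
    have hFvinter : ∀ V₁ V₂ : Subgroup L, Fv (V₁ ⊓ V₂) = Fv V₁ ∩ Fv V₂ := by
      intro V₁ V₂
      ext b
      simp [hFv, Subgroup.mem_inf]
    set cards := {m : ℕ | ∃ V : Subgroup L, (V.FiniteIndex ∧ U ≤ V) ∧ (Fv V).ncard = m}
      with hcards
    have hcne : cards.Nonempty := ⟨(Fv ⊤).ncard, ⊤, ⟨inferInstance, le_top⟩, rfl⟩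
    obtain ⟨V₀, hV₀SS, hV₀card⟩ : ∃ V : Subgroup L,
        (V.FiniteIndex ∧ U ≤ V) ∧ (Fv V).ncard = sInf cards := Nat.sInf_mem hcne
    have hmin : ∀ V : Subgroup L, V.FiniteIndex → U ≤ V → Fv V₀ ⊆ Fv V := by
      intro V h1 h2
      haveI := h1; haveI := hV₀SS.1
      have hVV : (V₀ ⊓ V).FiniteIndex ∧ U ≤ V₀ ⊓ V :=
        ⟨inferInstance, le_inf hV₀SS.2 h2⟩
      have hsub : Fv (V₀ ⊓ V) ⊆ Fv V₀ := by
        rw [hFvinter]; exact Set.inter_subset_left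
      have hle : sInf cards ≤ (Fv (V₀ ⊓ V)).ncard := Nat.sInf_le ⟨V₀ ⊓ V, hVV, rfl⟩
      have heq : Fv (V₀ ⊓ V) = Fv V₀ :=
        Set.eq_of_subset_of_ncard_le hsub (by rw [hV₀card]; exact hle) (Set.toFinite _)
      rw [← heq, hFvinter]
      exact Set.inter_subset_right
    obtain ⟨b, hb⟩ := hFvnonempty V₀ hV₀SS.1 hV₀SS.2
    refine ⟨↑(Quotient.out b), (Quotient.out b).2, ?_⟩
    apply hPmem.mpr
    intro V h1 h2
    exact hmin V h1 h2 hb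
  -- a section of L → L/R with values in P
  have hsec : ∀ h : L ⧸ R, ∃ x : L, x ∈ P ∧ QuotientGroup.mk x = h := by
    intro h
    induction h using QuotientGroup.induction_on with
    | H l =>
      obtain ⟨r, hr, hlr⟩ := hhit l
      refine ⟨l * r, hlr, ?_⟩
      have : (QuotientGroup.mk r : L ⧸ R) = 1 := (QuotientGroup.eq_one_iff r).mpr hr
      rw [QuotientGroup.mk_mul, this, mul_one]
  set σ : (L ⧸ R) → L := fun h => (hsec h).choose with hσ
  have hσP : ∀ h, σ h ∈ P := fun h => (hsec h).choose_spec.1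
  have hσmk : ∀ h, (QuotientGroup.mk (σ h) : L ⧸ R) = h := fun h => (hsec h).choose_spec.2
  set φ : FreeGroup (L ⧸ R) →* L := FreeGroup.lift σ with hφ
  have hφP : ∀ x, φ x ∈ P := by
    intro x
    have : φ.range ≤ P := FreeGroup.range_lift_le (by rintro _ ⟨h, rfl⟩; exact hσP h)
    exact this ⟨x, rfl⟩
  have hφπ : (QuotientGroup.mk' R).comp φ = FreeGroup.lift id := by
    apply FreeGroup.ext_hom
    intro h
    simp only [MonoidHom.coe_comp, Function.comp_apply, hφ, FreeGroup.lift_apply_of,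
      QuotientGroup.mk'_apply, id_eq]
    exact hσmk h
  have hφK : ∀ x ∈ presentationKernel (L ⧸ R), φ x ∈ R := by
    intro x hx
    have h1 : (QuotientGroup.mk' R) (φ x) = 1 := by
      rw [← MonoidHom.comp_apply, hφπ]
      exact hx
    rwa [QuotientGroup.mk'_apply, QuotientGroup.eq_one_iff] at h1
  -- centrality: [P, P ⊓ R] ⊆ U
  set q := QuotientGroup.mk' U with hq
  have hqsurj : Function.Surjective q := QuotientGroup.mk'_surjective U
  have hqone : ∀ u ∈ U, q u = 1 := fun u hu => (QuotientGroup.eq_one_iff u).mpr hu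
  set Abar := Subgroup.map q R with hAbar
  haveI : Abar.Normal := Subgroup.Normal.map ‹R.Normal› q hqsurj
  haveI hAbarfin : Finite ↥Abar := by
    have hsurj : Function.Surjective
        (fun b : ↥R ⧸ U.subgroupOf R =>
          (⟨q ↑(Quotient.out b), Subgroup.mem_map_of_mem q (Quotient.out b).2⟩ : ↥Abar)) := by
      rintro ⟨y, hy⟩
      obtain ⟨r, hr, hqr⟩ := hy
      set b0 : ↥R ⧸ U.subgroupOf R := QuotientGroup.mk (⟨r, hr⟩ : ↥R) with hb0
      refine ⟨b0, Subtype.ext ?_⟩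
      show q ↑(Quotient.out b0) = y
      rw [← hqr]
      have hmem : (Quotient.out b0)⁻¹ * ⟨r, hr⟩ ∈ U.subgroupOf R := by
        rw [← QuotientGroup.eq, hb0, QuotientGroup.out_eq']
      have hU2 : ((Quotient.out b0 : ↥R) : L)⁻¹ * r ∈ U := hmem
      have h3 := hqone _ hU2
      rw [map_mul, map_inv] at h3
      exact inv_mul_eq_one.mp h3
    exact Finite.of_surjective _ hsurj
  set c : (L ⧸ U) →* MulAut ↥Abar := MulAut.conjNormal with hc
  haveI : Finite c.range := Subtype.finite
  haveI : c.ker.FiniteIndex := Subgroup.finiteIndex_ker c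
  have hV₂fi : (Subgroup.comap q c.ker).FiniteIndex := by
    constructor
    rw [Subgroup.index_comap_of_surjective _ hqsurj]
    exact c.ker.index_ne_zero_of_finite
  have hUV₂ : U ≤ Subgroup.comap q c.ker := by
    intro u hu
    show q u ∈ c.ker
    rw [hqone u hu]
    exact c.ker.one_mem
  have hcent : ∀ p ∈ P, ∀ z ∈ P ⊓ R, p * z * p⁻¹ * z⁻¹ ∈ U := by
    intro p hp z hz
    have hker : c (q p) = 1 := hPmem.mp hp _ hV₂fi hUV₂
    have haz : q z ∈ Abar := Subgroup.mem_map_of_mem q hz.2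
    have h1 := congrArg (fun m : MulAut ↥Abar => ((m ⟨q z, haz⟩ : ↥Abar) : L ⧸ U)) hker
    rw [hc] at h1
    simp only [MulAut.conjNormal_apply, MulAut.one_apply] at h1
    have h2 : q (p * z * p⁻¹ * z⁻¹) = 1 := by
      rw [map_mul, map_mul, map_mul, map_inv, map_inv, h1, mul_inv_cancel]
    exact (QuotientGroup.eq_one_iff _).mp h2
  -- The homomorphism on the Hopf numerator
  have hmemPR : ∀ x : ↥(hopfNumerator (L ⧸ R)), φ ↑x ∈ P ⊓ R :=
    fun x => ⟨hφP _, hφK _ x.2.1⟩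
  set χ : ↥(hopfNumerator (L ⧸ R)) →* ↥(P ⊓ R) ⧸ U.subgroupOf (P ⊓ R) :=
    (QuotientGroup.mk' (U.subgroupOf (P ⊓ R))).comp
      ((φ.domRestrict (hopfNumerator (L ⧸ R))).codRestrict (P ⊓ R) hmemPR) with hχ
  have hχapply : ∀ x : ↥(hopfNumerator (L ⧸ R)),
      χ x = QuotientGroup.mk ⟨φ ↑x, hmemPR x⟩ := fun x => rfl
  have hDU : ∀ y ∈ hopfDenominator (L ⧸ R), φ y ∈ U := by
    have hle : hopfDenominator (L ⧸ R) ≤ Subgroup.comap φ U := by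
      unfold hopfDenominator
      rw [Subgroup.commutator_le]
      intro g₁ _ g₂ hg₂
      open scoped commutatorElement in show φ ⁅g₁, g₂⁆ ∈ U
      rw [map_commutatorElement, commutatorElement_def]
      exact hcent _ (hφP g₁) _ ⟨hφP g₂, hφK _ hg₂⟩
    exact fun y hy => hle hy
  have hker : ∀ x : ↥(hopfNumerator (L ⧸ R)),
      x ∈ (hopfDenominator (L ⧸ R)).subgroupOf (hopfNumerator (L ⧸ R)) → χ x = 1 := by
    intro x hx
    rw [hχapply, QuotientGroup.eq_one_iff, Subgroup.mem_subgroupOf]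
    exact hDU _ hx
  refine ⟨QuotientGroup.lift _ χ hker, ?_⟩
  -- surjectivity
  intro y
  induction y using QuotientGroup.induction_on with
  | H zt =>
    -- main claim : zt comes from the numerator
    obtain ⟨x, hxnum, hxU⟩ : ∃ x : FreeGroup (L ⧸ R),
        x ∈ hopfNumerator (L ⧸ R) ∧ (φ x)⁻¹ * ↑zt ∈ U := by
      set Mbar := Subgroup.map q φ.range with hMbar
      -- M̄ has finite index in L/U
      have hMbarfi : Mbar.FiniteIndex := by
        haveI : Finite (↥(P ⊓ R) ⧸ U.subgroupOf (P ⊓ R)) :=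
          Finite.of_injective _ (Subgroup.quotientSubgroupOfEmbeddingOfLE U inf_le_right).injective
        have hsurj : Function.Surjective
            (fun ab : (L ⧸ P) × (↥(P ⊓ R) ⧸ U.subgroupOf (P ⊓ R)) =>
              (QuotientGroup.mk (q ((Quotient.out ab.1) * ↑(Quotient.out ab.2))) :
                (L ⧸ U) ⧸ Mbar)) := by
          intro w
          induction w using QuotientGroup.induction_on with
          | H lam =>
            obtain ⟨l, rfl⟩ := hqsurj lam
            set a : L ⧸ P := QuotientGroup.mk l with ha
            have hp : (Quotient.out a)⁻¹ * l ∈ P := by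
              rw [← QuotientGroup.eq, QuotientGroup.out_eq']
            set p := (Quotient.out a)⁻¹ * l with hpdef
            set msec := σ (QuotientGroup.mk p) with hmsec
            have hmsecP : msec ∈ P := hσP _
            have hw₀ : p * msec⁻¹ ∈ P ⊓ R := by
              refine Subgroup.mem_inf.mpr ⟨?_, ?_⟩
              · exact mul_mem hp (inv_mem hmsecP)
              · have h1 : (QuotientGroup.mk (p * msec⁻¹) : L ⧸ R) = 1 := by
                  rw [QuotientGroup.mk_mul, QuotientGroup.mk_inv, hσmk, mul_inv_cancel]
                exact (QuotientGroup.eq_one_iff _).mp h1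
            set b : ↥(P ⊓ R) ⧸ U.subgroupOf (P ⊓ R) :=
              QuotientGroup.mk (⟨p * msec⁻¹, hw₀⟩ : ↥(P ⊓ R)) with hb
            refine ⟨⟨a, b⟩, ?_⟩
            show (QuotientGroup.mk (q ((Quotient.out a) * ↑(Quotient.out b))) :
              (L ⧸ U) ⧸ Mbar) = QuotientGroup.mk (q l)
            rw [QuotientGroup.eq]
            have hu : (Quotient.out b)⁻¹ * ⟨p * msec⁻¹, hw₀⟩ ∈ U.subgroupOf (P ⊓ R) := by
              rw [← QuotientGroup.eq, hb, QuotientGroup.out_eq']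
            have huU : ((Quotient.out b : ↥(P ⊓ R)) : L)⁻¹ * (p * msec⁻¹) ∈ U := hu
            have hcompute : ((Quotient.out a) * ((Quotient.out b : ↥(P ⊓ R)) : L))⁻¹ * l
                = (((Quotient.out b : ↥(P ⊓ R)) : L)⁻¹ * (p * msec⁻¹)) * msec := by
              rw [hpdef]; group
            rw [← map_inv, ← map_mul, hcompute, map_mul, hqone _ huU, one_mul]
            have : msec ∈ φ.range := ⟨FreeGroup.of (QuotientGroup.mk p), FreeGroup.lift_apply_of⟩
            exact Subgroup.mem_map_of_mem q this
        have : Finite ((L ⧸ U) ⧸ Mbar) := Finite.of_surjective _ hsurj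
        exact Subgroup.finiteIndex_of_finite_quotient (H := Mbar)
      -- the element z lies in every finite-index subgroup of L/U
      have hall : ∀ W : Subgroup (L ⧸ U), W.FiniteIndex → q ↑zt ∈ W := by
        intro W hW
        have h1 : (Subgroup.comap q W).FiniteIndex := by
          constructor
          rw [Subgroup.index_comap_of_surjective _ hqsurj]
          exact hW.1
        have h2 : U ≤ Subgroup.comap q W := by
          intro u hu
          show q u ∈ W
          rw [hqone u hu]
          exact W.one_mem
        exact hPmem.mp zt.2.1 _ h1 h2
      -- q z has finite order
      have hord : ∃ n, 0 < n ∧ (q ↑zt) ^ n = 1 := by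
        have hmem : q ↑zt ∈ Abar := Subgroup.mem_map_of_mem q zt.2.2
        refine ⟨Nat.card ↥Abar, Nat.card_pos, ?_⟩
        have h1 := pow_card_eq_one' (G := ↥Abar) (x := ⟨q ↑zt, hmem⟩)
        have h2 := congrArg (Subtype.val) h1
        push_cast at h2
        exact h2
      obtain ⟨n, hn, hzn⟩ := hord
      haveI : Group.FG (L ⧸ U) := inferInstance
      have hzcomm : q ↑zt ∈ ⁅Mbar, Mbar⁆ :=
        myMem_commutator_of_forall_finiteIndex ‹Group.FG (L ⧸ U)› Mbar hMbarfi hn hzn hall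
      have hcommeq : ⁅Mbar, Mbar⁆ =
          Subgroup.map (q.comp φ) (commutator (FreeGroup (L ⧸ R))) := by
        rw [commutator_def, Subgroup.map_commutator, hMbar]
        have : Subgroup.map (q.comp φ) ⊤ = Subgroup.map q φ.range := by
          rw [← MonoidHom.range_eq_map, MonoidHom.range_comp]
        rw [this]
      rw [hcommeq] at hzcomm
      obtain ⟨y, hy, hqy⟩ := hzcomm
      have hU : (φ y)⁻¹ * ↑zt ∈ U := by
        have : q ((φ y)⁻¹ * ↑zt) = 1 := by
          rw [map_mul, map_inv]
          have : q (φ y) = q ↑zt := hqy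
          rw [this]
          group
        exact (QuotientGroup.eq_one_iff _).mp this
      have hφyR : φ y ∈ R := by
        have hrw : φ y = ↑zt * ((φ y)⁻¹ * ↑zt)⁻¹ := by group
        rw [hrw]
        exact mul_mem zt.2.2 (inv_mem (hUR hU))
      have hyK : y ∈ presentationKernel (L ⧸ R) := by
        show y ∈ (FreeGroup.lift id).ker
        rw [MonoidHom.mem_ker, ← hφπ]
        show (QuotientGroup.mk' R) (φ y) = 1
        rw [QuotientGroup.mk'_apply, QuotientGroup.eq_one_iff]
        exact hφyR
      exact ⟨y, ⟨hyK, hy⟩, hU⟩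
    refine ⟨QuotientGroup.mk (⟨x, hxnum⟩ : ↥(hopfNumerator (L ⧸ R))), ?_⟩
    show χ ⟨x, hxnum⟩ = QuotientGroup.mk zt
    rw [hχapply, QuotientGroup.eq]
    show ((⟨φ x, _⟩ : ↥(P ⊓ R)))⁻¹ * zt ∈ U.subgroupOf (P ⊓ R)
    rw [Subgroup.mem_subgroupOf]
    exact hxU
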